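/- Let φ be a flat ADT formula in negation normal form with size constraints over a well-defined ADT, and let φ̃ be its reduct obtained by the reduction rules extended with the size rule (7) and the modified constructor constraint CtorSpec′_f. If φ̃ is unsatisfiable over EUF+LIA, then φ is unsatisfiable over the ADT with size. -/

import Mathlib

/-!
Reduction of ADT constraints **with size constraints** to EUF+LIA:
soundness for unsatisfiability (Lemma 1 of the paper).
-/

structure ADTSig where
  numSorts : ℕ
  numCtors : ℕ
  ctorArgs : Fin numCtors → List (Fin numSorts)
  ctorRes : Fin numCtors → Fin numSorts

namespace ADTSig

inductive Term (S : ADTSig) : Fin S.numSorts → Type where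
  | mk (f : Fin S.numCtors)
      (args : (i : Fin (S.ctorArgs f).length) → Term S ((S.ctorArgs f).get i)) :
      Term S (S.ctorRes f)

/-- The size `|t|` of a constructor term: the number of constructor
occurrences. -/
def Term.size {S : ADTSig} : {σ : Fin S.numSorts} → Term S σ → ℕ
  | _, .mk _ args => 1 + ∑ i, (args i).size

def Term.head {S : ADTSig} : {σ : Fin S.numSorts} → Term S σ → Fin S.numCtors
  | _, .mk f _ => f

def WellDefined (S : ADTSig) : Prop := ∀ σ, Nonempty (S.Term σ)

structure SelInterp (S : ADTSig) where
  sel : (f : Fin S.numCtors) → (i : Fin (S.ctorArgs f).length) →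
    S.Term (S.ctorRes f) → S.Term ((S.ctorArgs f).get i)
  sel_mk : ∀ f i args, sel f i (Term.mk f args) = args i

/-! ### Presburger formulas (for the size constraints) -/

inductive PTerm (n : ℕ) where
  | cst (c : ℤ)
  | var (i : Fin n)
  | add (s t : PTerm n)
  | smul (c : ℤ) (t : PTerm n)

def PTerm.eval {n : ℕ} (ρ : Fin n → ℤ) : PTerm n → ℤ
  | .cst c => c
  | .var i => ρ i
  | .add s t => s.eval ρ + t.eval ρ
  | .smul c t => c * t.eval ρ

inductive PForm : ℕ → Type where
  | le {n} (s t : PTerm n) : PForm n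
  | peq {n} (s t : PTerm n) : PForm n
  | not {n} (φ : PForm n) : PForm n
  | and {n} (φ ψ : PForm n) : PForm n
  | or {n} (φ ψ : PForm n) : PForm n
  | ex {n} (φ : PForm (n + 1)) : PForm n

def PForm.eval : {n : ℕ} → (Fin n → ℤ) → PForm n → Prop
  | _, ρ, .le s t => s.eval ρ ≤ t.eval ρ
  | _, ρ, .peq s t => s.eval ρ = t.eval ρ
  | _, ρ, .not φ => ¬ φ.eval ρ
  | _, ρ, .and φ ψ => φ.eval ρ ∧ ψ.eval ρ
  | _, ρ, .or φ ψ => φ.eval ρ ∨ ψ.eval ρ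
  | _, ρ, .ex φ => ∃ z : ℤ, φ.eval (Fin.cons z ρ)

/-! ### Flat formulas with size constraints -/

/-- Literals of flat ADT formulas with size constraints: as in the size-free
case, plus Presburger constraints `φ_Pres(|x₁|,…,|x_n|)` on the sizes of
(the terms assigned to) variables. -/
inductive Lit (S : ADTSig) (V : Fin S.numSorts → Type) where
  | ctorEq (f : Fin S.numCtors)
      (xs : (i : Fin (S.ctorArgs f).length) → V ((S.ctorArgs f).get i))
      (x0 : V (S.ctorRes f))
  | selEq (f : Fin S.numCtors) (j : Fin (S.ctorArgs f).length)
      (x : V (S.ctorRes f)) (y : V ((S.ctorArgs f).get j))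
  | tst (f : Fin S.numCtors) (x : V (S.ctorRes f))
  | ntst (f : Fin S.numCtors) (x : V (S.ctorRes f))
  | eqv {σ : Fin S.numSorts} (x y : V σ)
  | nev {σ : Fin S.numSorts} (x y : V σ)
  | sizeC {n : ℕ} (xs : Fin n → Σ σ, V σ) (P : PForm n)

inductive Formula (S : ADTSig) (V : Fin S.numSorts → Type) where
  | fls
  | lit (l : Lit S V)
  | and (φ ψ : Formula S V)
  | or (φ ψ : Formula S V)

variable {S : ADTSig} {V : Fin S.numSorts → Type}

def Lit.holds (I : SelInterp S) (β : (σ : Fin S.numSorts) → V σ → S.Term σ) :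
    Lit S V → Prop
  | .ctorEq f xs x0 => Term.mk f (fun i => β _ (xs i)) = β _ x0
  | .selEq f j x y => I.sel f j (β _ x) = β _ y
  | .tst f x => (β _ x).head = f
  | .ntst f x => (β _ x).head ≠ f
  | .eqv x y => β _ x = β _ y
  | .nev x y => β _ x ≠ β _ y
  | .sizeC xs P => P.eval (fun i => ((β (xs i).1 (xs i).2).size : ℤ))

def Formula.holds (I : SelInterp S) (β : (σ : Fin S.numSorts) → V σ → S.Term σ) :
    Formula S V → Prop
  | .fls => False
  | .lit l => l.holds I β
  | .and φ ψ => φ.holds I β ∧ ψ.holds I β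
  | .or φ ψ => φ.holds I β ∨ ψ.holds I β

def Formula.ADTSat (φ : Formula S V) : Prop :=
  ∃ (I : SelInterp S) (β : (σ : Fin S.numSorts) → V σ → S.Term σ), φ.holds I β

/-! ### The EUF+LIA side, with size functions -/

/-- An EUF+LIA model for the vocabulary of the reduction with size: `size_σ`
replaces `depth_σ`. -/
structure RModel (S : ADTSig) where
  ctorF : (f : Fin S.numCtors) → (Fin (S.ctorArgs f).length → ℤ) → ℤ
  selF : (f : Fin S.numCtors) → Fin (S.ctorArgs f).length → ℤ → ℤ
  ctorIdF : Fin S.numSorts → ℤ → ℤ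
  sizeF : Fin S.numSorts → ℤ → ℤ

def ctorIdxZ (S : ADTSig) (f : Fin S.numCtors) : ℤ :=
  ((Finset.univ.filter
      (fun g : Fin S.numCtors => g ≤ f ∧ S.ctorRes g = S.ctorRes f)).card : ℤ)

def InSort (S : ADTSig) (σ : Fin S.numSorts) (x : ℤ) : Prop :=
  Finite (S.Term σ) → (0 ≤ x ∧ x < (Nat.card (S.Term σ) : ℤ))

/-- The size image `𝕊_σ` of a sort, as a set of integers. -/
def SizeImageZ (S : ADTSig) (σ : Fin S.numSorts) : Set ℤ :=
  {z | ∃ t : S.Term σ, (t.size : ℤ) = z}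

/-- `CtorSpec′_f(x₀,…,x_n)` of Table II. -/
def CtorSpec' (M : RModel S) (f : Fin S.numCtors) (x0 : ℤ)
    (xs : Fin (S.ctorArgs f).length → ℤ) : Prop :=
  M.ctorF f xs = x0 ∧
  M.ctorIdF (S.ctorRes f) x0 = ctorIdxZ S f ∧
  (∀ j, M.selF f j x0 = xs j ∧
     M.sizeF ((S.ctorArgs f).get j) (xs j) ∈ SizeImageZ S ((S.ctorArgs f).get j)) ∧
  M.sizeF (S.ctorRes f) x0 = 1 + ∑ j, M.sizeF ((S.ctorArgs f).get j) (xs j)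

def ExCtorSpec' (M : RModel S) (f : Fin S.numCtors) (x : ℤ) : Prop :=
  ∃ xs : Fin (S.ctorArgs f).length → ℤ,
    (∀ j, InSort S ((S.ctorArgs f).get j) (xs j)) ∧ CtorSpec' M f x xs

/-- The reduct of a literal: rules (1)–(6) with `CtorSpec′`, and rule (7) for
size literals (`|x| ≈ y` becomes `size_σ(x̃) ≈ y ∧ y ∈ 𝕊_σ`). -/
def Lit.redHolds (M : RModel S) (β : (σ : Fin S.numSorts) → V σ → ℤ) :
    Lit S V → Prop
  | .ctorEq f xs x0 => CtorSpec' M f (β _ x0) (fun i => β _ (xs i))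
  | .selEq f j x y => M.selF f j (β _ x) = β _ y ∧
      ∃ g, S.ctorRes g = S.ctorRes f ∧ ExCtorSpec' M g (β _ x)
  | .tst f x => ExCtorSpec' M f (β _ x)
  | .ntst f x => ∃ g, S.ctorRes g = S.ctorRes f ∧ g ≠ f ∧ ExCtorSpec' M g (β _ x)
  | .eqv x y => β _ x = β _ y
  | .nev x y => β _ x ≠ β _ y
  | .sizeC xs P =>
      P.eval (fun i => M.sizeF (xs i).1 (β (xs i).1 (xs i).2)) ∧
      ∀ i, M.sizeF (xs i).1 (β (xs i).1 (xs i).2) ∈ SizeImageZ S (xs i).1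

def Formula.redHolds (M : RModel S) (β : (σ : Fin S.numSorts) → V σ → ℤ) :
    Formula S V → Prop
  | .fls => False
  | .lit l => l.redHolds M β
  | .and φ ψ => φ.redHolds M β ∧ ψ.redHolds M β
  | .or φ ψ => φ.redHolds M β ∨ ψ.redHolds M β

def Formula.RedSat (φ : Formula S V) : Prop :=
  ∃ (M : RModel S) (β : (σ : Fin S.numSorts) → V σ → ℤ),
    φ.redHolds M β ∧ ∀ σ (x : V σ), InSort S σ (β σ x)

end ADTSig


namespace ADTSig

section Reduction

variable {S : ADTSig}

/-- Injective encoding of constructor terms into `ℕ`. -/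
def Term.encode : {σ : Fin S.numSorts} → S.Term σ → ℕ
  | _, .mk f args =>
      Nat.pair f.val (Encodable.encode (List.ofFn fun i => (args i).encode))

theorem Term.encode_inj : ∀ {σ : Fin S.numSorts} (t : S.Term σ)
    {τ : Fin S.numSorts} (t' : S.Term τ), t.encode = t'.encode → σ = τ ∧ HEq t t' := by
  intro σ t
  induction t with
  | mk f args ih =>
    intro τ t' h
    cases t' with
    | mk g b =>
      rw [Term.encode, Term.encode, Nat.pair_eq_pair] at h
      obtain ⟨h1, h2⟩ := h
      have hfg : f = g := Fin.val_injective h1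
      subst hfg
      have h3 := Encodable.encode_injective h2
      rw [List.ofFn_inj] at h3
      have hb : args = b := by
        funext i
        exact eq_of_heq (ih i (b i) (congrFun h3 i)).2
      subst hb
      exact ⟨rfl, HEq.rfl⟩

theorem Term.encode_injective {σ : Fin S.numSorts} :
    Function.Injective (Term.encode (S := S) (σ := σ)) := fun t t' h =>
  eq_of_heq (Term.encode_inj t t' h).2

open Classical in
/-- Injective encoding of constructor terms into `ℤ`, landing in
`[0, Nat.card)` whenever the sort is finite. -/
noncomputable def encZ (σ : Fin S.numSorts) (t : S.Term σ) : ℤ :=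
  if h : Finite (S.Term σ) then (((@Finite.equivFin _ h) t : Fin _) : ℤ)
  else (t.encode : ℤ)

theorem encZ_injective (σ : Fin S.numSorts) : Function.Injective (encZ (S := S) σ) := by
  classical
  intro a b h
  by_cases hf : Finite (S.Term σ)
  · rw [encZ, encZ, dif_pos hf, dif_pos hf] at h
    have : ((@Finite.equivFin _ hf) a) = ((@Finite.equivFin _ hf) b) := by
      apply Fin.ext
      exact_mod_cast h
    exact (@Finite.equivFin _ hf).injective this
  · rw [encZ, encZ, dif_neg hf, dif_neg hf] at h
    exact Term.encode_injective (by exact_mod_cast h)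

theorem encZ_inSort (σ : Fin S.numSorts) (t : S.Term σ) : InSort S σ (encZ σ t) := by
  classical
  intro hfin
  rw [encZ, dif_pos hfin]
  constructor
  · exact_mod_cast Nat.zero_le _
  · exact_mod_cast ((@Finite.equivFin _ hfin) t).isLt

variable (hS : S.WellDefined)

open Classical in
/-- Decoding, a left inverse of `encZ`. -/
noncomputable def decZ (σ : Fin S.numSorts) (x : ℤ) : S.Term σ :=
  if h : ∃ t : S.Term σ, encZ σ t = x then h.choose else Classical.choice (hS σ)

theorem decZ_encZ (σ : Fin S.numSorts) (t : S.Term σ) : decZ hS σ (encZ σ t) = t := by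
  unfold decZ
  have h : ∃ t' : S.Term σ, encZ σ t' = encZ σ t := ⟨t, rfl⟩
  rw [dif_pos h]
  exact encZ_injective σ h.choose_spec

variable (I : SelInterp S)

/-- The EUF+LIA model built from an ADT model. -/
noncomputable def mkModel : RModel S where
  ctorF f v := encZ (S.ctorRes f) (Term.mk f fun i => decZ hS _ (v i))
  selF f j x := encZ _ (I.sel f j (decZ hS _ x))
  ctorIdF σ x := ctorIdxZ S ((decZ hS σ x).head)
  sizeF σ x := ((decZ hS σ x).size : ℤ)

theorem mkModel_ctorSpec (f : Fin S.numCtors)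
    (args : (i : Fin (S.ctorArgs f).length) → S.Term ((S.ctorArgs f).get i)) :
    CtorSpec' (mkModel hS I) f (encZ _ (Term.mk f args)) (fun i => encZ _ (args i)) := by
  refine ⟨?_, ?_, ?_, ?_⟩
  · show encZ _ (Term.mk f fun i => decZ hS _ (encZ _ (args i))) = _
    have harg : (fun i => decZ hS _ (encZ _ (args i))) = args :=
      funext fun i => decZ_encZ hS _ _
    rw [harg]
  · show ctorIdxZ S ((decZ hS _ (encZ _ (Term.mk f args))).head) = _
    rw [decZ_encZ]
    rfl
  · intro j
    constructor
    · show encZ _ (I.sel f j (decZ hS _ (encZ _ (Term.mk f args)))) = _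
      rw [decZ_encZ, I.sel_mk]
    · show ((decZ hS _ (encZ _ (args j))).size : ℤ) ∈ _
      rw [decZ_encZ]
      exact ⟨args j, rfl⟩
  · show ((decZ hS _ (encZ _ (Term.mk f args))).size : ℤ) =
      1 + ∑ j, ((decZ hS _ (encZ _ (args j))).size : ℤ)
    rw [decZ_encZ]
    simp only [decZ_encZ]
    show (((1 : ℕ) + ∑ i, (args i).size : ℕ) : ℤ) = _
    push_cast
    ring

theorem mkModel_exCtorSpec (f : Fin S.numCtors)
    (args : (i : Fin (S.ctorArgs f).length) → S.Term ((S.ctorArgs f).get i)) :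
    ExCtorSpec' (mkModel hS I) f (encZ _ (Term.mk f args)) :=
  ⟨fun i => encZ _ (args i), fun j => encZ_inSort _ _, mkModel_ctorSpec hS I f args⟩

/-- Every encoded term satisfies `ExCtorSpec'` for its head constructor. -/
theorem mkModel_exCtorSpec_head {σ : Fin S.numSorts} (t : S.Term σ) :
    S.ctorRes t.head = σ ∧ ExCtorSpec' (mkModel hS I) t.head (encZ σ t) := by
  cases t with
  | mk f args => exact ⟨rfl, mkModel_exCtorSpec hS I f args⟩

theorem mkModel_sizeF {σ : Fin S.numSorts} (t : S.Term σ) :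
    (mkModel hS I).sizeF σ (encZ σ t) = (t.size : ℤ) := by
  show ((decZ hS σ (encZ σ t)).size : ℤ) = _
  rw [decZ_encZ]

theorem lit_red {V : Fin S.numSorts → Type}
    (β : (σ : Fin S.numSorts) → V σ → S.Term σ) (l : Lit S V)
    (h : l.holds I β) :
    l.redHolds (mkModel hS I) (fun σ x => encZ σ (β σ x)) := by
  cases l with
  | ctorEq f xs x0 =>
    have := mkModel_ctorSpec hS I f (fun i => β _ (xs i))
    rwa [show Term.mk f (fun i => β _ (xs i)) = β _ x0 from h] at this
  | selEq f j x y =>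
    refine ⟨?_, ?_⟩
    · show encZ _ (I.sel f j (decZ hS _ (encZ _ (β _ x)))) = _
      rw [decZ_encZ, h]
    · obtain ⟨hres, hex⟩ := mkModel_exCtorSpec_head hS I (β _ x)
      exact ⟨(β _ x).head, hres, hex⟩
  | tst f x =>
    obtain ⟨hres, hex⟩ := mkModel_exCtorSpec_head hS I (β _ x)
    rwa [h] at hex
  | ntst f x =>
    obtain ⟨hres, hex⟩ := mkModel_exCtorSpec_head hS I (β _ x)
    exact ⟨(β _ x).head, hres, h, hex⟩
  | eqv x y => simp only [Lit.redHolds]; rw [show β _ x = β _ y from h]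
  | nev x y =>
    intro henc
    exact h (encZ_injective _ henc)
  | sizeC xs P =>
    have heq : (fun i => (mkModel hS I).sizeF (xs i).1
          (encZ (xs i).1 (β (xs i).1 (xs i).2))) =
          fun i => ((β (xs i).1 (xs i).2).size : ℤ) := by
      funext i
      exact mkModel_sizeF hS I _
    constructor
    · show P.eval _
      rw [heq]
      exact h
    · intro i
      rw [mkModel_sizeF]
      exact ⟨_, rfl⟩

end Reduction

end ADTSig

open ADTSig in
/-- **Lemma 1.** If the reduct `φ̃` of a flat ADT formula `φ` in NNF with size
constraints is unsatisfiable over EUF+LIA, then `φ` is unsatisfiable over the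
ADT with size. -/
theorem size_reduction_sound (S : ADTSig) (hS : S.WellDefined)
    (V : Fin S.numSorts → Type) (φ : Formula S V)
    (hunsat : ¬ φ.RedSat) : ¬ φ.ADTSat := by
  intro hsat
  obtain ⟨I, β, hh⟩ := hsat
  apply hunsat
  refine ⟨mkModel hS I, fun σ x => encZ σ (β σ x), ?_, fun σ x => encZ_inSort σ (β σ x)⟩
  clear hunsat
  induction φ with
  | fls => exact hh
  | lit l => exact lit_red hS I β l hh
  | and φ ψ ihφ ihψ => exact ⟨ihφ hh.1, ihψ hh.2⟩
  | or φ ψ ihφ ihψ =>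
    cases hh with
    | inl h => exact Or.inl (ihφ h)
    | inr h => exact Or.inr (ihψ h)
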